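/- Let I = [a,b), 1 ≤ p < ∞, and let a U^p-atom be a step function a(t) = Σ_{k=1}^K φ_{k-1} 1_{[t_{k-1},t_k)}(t) with a = t₀ < … < t_K = b and Σ_{k=1}^K ‖φ_{k-1}‖^p_{L²ₓ} = 1. Then every U^p-atom a satisfies ‖a‖_{V^p(I)} ≤ 2, and consequently ‖u‖_{V^p(I)} ≤ 2‖u‖_{U^p(I)} for every u in the atomic space U^p(I). -/

import Mathlib

/-- The set of partition sums defining the `V^p([a,b))`-norm. -/
def variationSums {H : Type*} [NormedAddCommGroup H] (p : ℝ) (u : ℝ → H)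
    (a b : ℝ) : Set ℝ :=
  {s | ∃ (K : ℕ) (t : Fin (K + 1) → ℝ), StrictMono t ∧ t 0 = a ∧ t (Fin.last K) = b ∧
    s = (∑ k : Fin K, ‖u (t k.succ) - u (t k.castSucc)‖ ^ p) ^ (1 / p)}

/-- A `U^p([a,b))`-atom: a step function `Σ_k φ_{k-1} 1_{[t_{k-1},t_k)}` subordinate to a
partition `a = t₀ < … < t_K = b` with `Σ_k ‖φ_{k-1}‖^p = 1`. -/
def IsUpAtom {H : Type*} [NormedAddCommGroup H] (p a b : ℝ) (f : ℝ → H) : Prop :=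
  ∃ (K : ℕ) (t : Fin (K + 1) → ℝ) (φ : Fin K → H),
    StrictMono t ∧ t 0 = a ∧ t (Fin.last K) = b ∧
    (∑ k : Fin K, ‖φ k‖ ^ p) = 1 ∧
    ∀ s : ℝ, f s = ∑ k : Fin K, if t k.castSucc ≤ s ∧ s < t k.succ then φ k else 0

section UpAux

open Finset

/-- index of the interval of the partition `t` containing `x` (shifted by one);
`0` if `x < t 0` and `K+1` if `x ≥ t (last K)`. -/
noncomputable def atomIdx {K : ℕ} (t : Fin (K + 1) → ℝ) (x : ℝ) : ℕ :=
  (Finset.univ.filter fun m : Fin (K + 1) => t m ≤ x).card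

def atomVal {H : Type*} [NormedAddCommGroup H] {K : ℕ} (φ : Fin K → H) : ℕ → H
  | 0 => 0
  | m + 1 => if h : m < K then φ ⟨m, h⟩ else 0

lemma atomIdx_le {K : ℕ} (t : Fin (K + 1) → ℝ) (x : ℝ) : atomIdx t x ≤ K + 1 := by
  classical
  calc atomIdx t x ≤ (Finset.univ : Finset (Fin (K+1))).card := Finset.card_filter_le _ _
  _ = K + 1 := by simp

lemma atomIdx_mono {K : ℕ} (t : Fin (K + 1) → ℝ) : Monotone (atomIdx t) := by
  intro x y hxy
  apply Finset.card_le_card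
  intro m hm
  simp only [Finset.mem_filter, Finset.mem_univ, true_and] at *
  exact hm.trans hxy

lemma atomIdx_spec {K : ℕ} {t : Fin (K + 1) → ℝ} (ht : StrictMono t) (x : ℝ)
    (m : Fin (K + 1)) : t m ≤ x ↔ (m : ℕ) < atomIdx t x := by
  classical
  constructor
  · intro h
    have hsub : Finset.Iic m ⊆ Finset.univ.filter fun m' : Fin (K+1) => t m' ≤ x := by
      intro m' hm'
      simp only [Finset.mem_Iic] at hm'
      simp only [Finset.mem_filter, Finset.mem_univ, true_and]
      exact le_trans (ht.monotone hm') h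
    have := Finset.card_le_card hsub
    rw [Fin.card_Iic] at this
    unfold atomIdx
    omega
  · intro h
    by_contra hc
    have hsub : (Finset.univ.filter fun m' : Fin (K+1) => t m' ≤ x) ⊆ Finset.Iio m := by
      intro m' hm'
      simp only [Finset.mem_filter, Finset.mem_univ, true_and] at hm'
      simp only [Finset.mem_Iio]
      by_contra hc'
      exact hc (le_trans (ht.monotone (not_lt.1 hc')) hm')
    have := Finset.card_le_card hsub
    rw [Fin.card_Iio] at this
    unfold atomIdx at h
    omega

lemma atom_eq_atomVal {H : Type*} [NormedAddCommGroup H] {K : ℕ} {t : Fin (K + 1) → ℝ}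
    (ht : StrictMono t) (φ : Fin K → H) (x : ℝ) :
    (∑ k : Fin K, if t k.castSucc ≤ x ∧ x < t k.succ then φ k else 0)
      = atomVal φ (atomIdx t x) := by
  classical
  rcases hc : atomIdx t x with _ | c
  · rw [Finset.sum_eq_zero]
    · rfl
    intro k _
    rw [if_neg]
    rintro ⟨h1, -⟩
    have := (atomIdx_spec ht x k.castSucc).1 h1
    omega
  · rcases lt_or_ge c K with hcK | hcK
    · have hval : atomVal φ (c + 1) = φ ⟨c, hcK⟩ := by simp [atomVal, hcK]
      rw [hval]
      rw [Finset.sum_eq_single (⟨c, hcK⟩ : Fin K)]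
      · rw [if_pos]
        constructor
        · rw [atomIdx_spec ht x, hc]; simp
        · rw [← not_le, atomIdx_spec ht x, hc]; simp
      · intro k _ hk
        rw [if_neg]
        rintro ⟨h1, h2⟩
        rw [atomIdx_spec ht x, hc] at h1
        rw [← not_le, atomIdx_spec ht x, hc] at h2
        simp only [Fin.coe_castSucc, not_lt, Fin.val_succ] at h1 h2
        exact hk (Fin.ext (by simp only [Fin.val_mk]; omega))
      · simp
    · have hcK' : c = K := by have := atomIdx_le t x; omega
      subst hcK'
      rw [Finset.sum_eq_zero]
      · simp [atomVal]
      intro k _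
      rw [if_neg]
      rintro ⟨-, h2⟩
      rw [← not_le, atomIdx_spec ht x, hc] at h2
      exact h2 (by simp [Fin.val_succ])

lemma sum_atomVal {H : Type*} [NormedAddCommGroup H] {p : ℝ} (hp0 : p ≠ 0) {K : ℕ}
    (φ : Fin K → H) :
    ∑ m ∈ Finset.range (K + 2), ‖atomVal φ m‖ ^ p = ∑ k : Fin K, ‖φ k‖ ^ p := by
  rw [Finset.sum_range_succ', Finset.sum_range_succ]
  have h0 : ‖atomVal φ 0‖ ^ (p:ℝ) = 0 := by
    simp [atomVal, Real.zero_rpow hp0]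
  have hK : ‖atomVal φ (K + 1)‖ ^ (p:ℝ) = 0 := by
    simp [atomVal, Real.zero_rpow hp0]
  rw [h0, hK, add_zero, add_zero]
  rw [← Fin.sum_univ_eq_sum_range (fun m => ‖atomVal φ (m + 1)‖ ^ p) K]
  apply Finset.sum_congr rfl
  intro k _
  congr 1
  simp [atomVal, k.isLt]

lemma atom_partition_sum_le {H : Type*} [NormedAddCommGroup H] {p : ℝ} (hp : 1 ≤ p)
    {K : ℕ} {t : Fin (K + 1) → ℝ} (ht : StrictMono t) {φ : Fin K → H}
    (hφ : ∑ k : Fin K, ‖φ k‖ ^ p = 1)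
    {f : ℝ → H}
    (hf : ∀ x, f x = ∑ k : Fin K, if t k.castSucc ≤ x ∧ x < t k.succ then φ k else 0)
    {K' : ℕ} {s : Fin (K' + 1) → ℝ} (hs : Monotone s) :
    (∑ j : Fin K', ‖f (s j.succ) - f (s j.castSucc)‖ ^ p) ^ (1 / p) ≤ 2 := by
  classical
  have hp0 : p ≠ 0 := by intro h; rw [h] at hp; linarith
  set n : Fin (K' + 1) → ℕ := fun j => atomIdx t (s j) with hn
  have hfn : ∀ j, f (s j) = atomVal φ (n j) := fun j => by
    rw [hf, atom_eq_atomVal ht]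
  have hnmono : ∀ {i j : Fin (K' + 1)}, i ≤ j → n i ≤ n j := fun hij =>
    atomIdx_mono t (hs hij)
  set J : Finset (Fin K') := Finset.univ.filter fun j => n j.castSucc ≠ n j.succ with hJ
  have hJlt : ∀ {j : Fin K'}, j ∈ J → n j.castSucc < n j.succ := by
    intro j hj
    have h1 : n j.castSucc ≤ n j.succ := hnmono (by rw [Fin.le_def]; simp)
    have h2 : n j.castSucc ≠ n j.succ := by simpa [hJ] using hj
    omega
  set aa : Fin K' → ℝ := fun j => if j ∈ J then ‖atomVal φ (n j.succ)‖ else 0 with haa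
  set bb : Fin K' → ℝ := fun j => if j ∈ J then ‖atomVal φ (n j.castSucc)‖ else 0 with hbb
  have hterm : ∀ j : Fin K', ‖f (s j.succ) - f (s j.castSucc)‖ ≤ aa j + bb j := by
    intro j
    by_cases hj : j ∈ J
    · simp only [haa, hbb, if_pos hj]
      rw [hfn, hfn]
      exact norm_sub_le _ _
    · have heq : n j.castSucc = n j.succ := by
        by_contra hne
        exact hj (by simp [hJ, hne])
      simp only [haa, hbb, if_neg hj]
      rw [hfn, hfn, heq, sub_self, norm_zero]
      norm_num
  have h1 : (∑ j : Fin K', ‖f (s j.succ) - f (s j.castSucc)‖ ^ p)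
      ≤ ∑ j : Fin K', |aa j + bb j| ^ p := by
    apply Finset.sum_le_sum
    intro j _
    have h0 : (0:ℝ) ≤ aa j + bb j := le_trans (norm_nonneg _) (hterm j)
    rw [abs_of_nonneg h0]
    exact Real.rpow_le_rpow (norm_nonneg _) (hterm j) (by linarith)
  -- generic bound for sums over J
  have hbound : ∀ g : Fin K' → ℕ, (∀ i ∈ J, ∀ j ∈ J, g i = g j → i = j) →
      (∀ j, g j < K + 2) → ∑ j ∈ J, ‖atomVal φ (g j)‖ ^ p ≤ 1 := by
    intro g hinj hgb
    rw [← Finset.sum_image (f := fun m => ‖atomVal φ m‖ ^ p) hinj]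
    rw [← hφ, ← sum_atomVal hp0 φ]
    apply Finset.sum_le_sum_of_subset_of_nonneg
    · intro m hm
      simp only [Finset.mem_image] at hm
      obtain ⟨j, -, rfl⟩ := hm
      exact Finset.mem_range.2 (hgb j)
    · intro m _ _
      exact Real.rpow_nonneg (norm_nonneg _) p
  have haasum : ∑ j : Fin K', |aa j| ^ p ≤ 1 := by
    have hcongr : ∀ j : Fin K', |aa j| ^ p
        = if j ∈ J then ‖atomVal φ (n j.succ)‖ ^ p else 0 := by
      intro j
      by_cases hj : j ∈ J <;>
        simp [haa, hj, abs_of_nonneg, Real.zero_rpow hp0]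
    rw [Finset.sum_congr rfl fun j _ => hcongr j, Finset.sum_ite_mem, Finset.univ_inter]
    apply hbound
    · intro i hi j hj hij
      by_contra hne
      rcases lt_or_gt_of_ne hne with h | h
      · have h1 : n i.succ ≤ n j.castSucc := hnmono (by
          rw [Fin.le_def]
          simp only [Fin.val_succ, Fin.coe_castSucc]
          have := Fin.lt_def.1 h
          omega)
        have := hJlt hj
        omega
      · have h1 : n j.succ ≤ n i.castSucc := hnmono (by
          rw [Fin.le_def]
          simp only [Fin.val_succ, Fin.coe_castSucc]
          have := Fin.lt_def.1 h
          omega)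
        have := hJlt hi
        omega
    · intro j
      have := atomIdx_le t (s j.succ)
      have h2 : atomIdx t (s j.succ) < K + 2 := by omega
      simpa [hn] using h2
  have hbbsum : ∑ j : Fin K', |bb j| ^ p ≤ 1 := by
    have hcongr : ∀ j : Fin K', |bb j| ^ p
        = if j ∈ J then ‖atomVal φ (n j.castSucc)‖ ^ p else 0 := by
      intro j
      by_cases hj : j ∈ J <;>
        simp [hbb, hj, abs_of_nonneg, Real.zero_rpow hp0]
    rw [Finset.sum_congr rfl fun j _ => hcongr j, Finset.sum_ite_mem, Finset.univ_inter]
    apply hbound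
    · intro i hi j hj hij
      by_contra hne
      rcases lt_or_gt_of_ne hne with h | h
      · have h1 : n i.succ ≤ n j.castSucc := hnmono (by
          rw [Fin.le_def]
          simp only [Fin.val_succ, Fin.coe_castSucc]
          have := Fin.lt_def.1 h
          omega)
        have := hJlt hi
        omega
      · have h1 : n j.succ ≤ n i.castSucc := hnmono (by
          rw [Fin.le_def]
          simp only [Fin.val_succ, Fin.coe_castSucc]
          have := Fin.lt_def.1 h
          omega)
        have := hJlt hj
        omega
    · intro j
      have := atomIdx_le t (s j.castSucc)
      have h2 : atomIdx t (s j.castSucc) < K + 2 := by omega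
      simpa [hn] using h2
  have habs : ∀ g : Fin K' → ℝ, (∑ j : Fin K', |g j| ^ p) ^ (1/p) ≤ 1 →
      True := fun _ _ => trivial
  calc (∑ j : Fin K', ‖f (s j.succ) - f (s j.castSucc)‖ ^ p) ^ (1 / p)
      ≤ (∑ j : Fin K', |aa j + bb j| ^ p) ^ (1 / p) := by
        apply Real.rpow_le_rpow _ h1 (by positivity)
        exact Finset.sum_nonneg fun j _ => Real.rpow_nonneg (norm_nonneg _) p
    _ ≤ (∑ j : Fin K', |aa j| ^ p) ^ (1 / p) + (∑ j : Fin K', |bb j| ^ p) ^ (1 / p) :=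
        Real.Lp_add_le Finset.univ aa bb hp
    _ ≤ 1 + 1 := by
        apply add_le_add
        · exact Real.rpow_le_one
            (Finset.sum_nonneg fun j _ => Real.rpow_nonneg (abs_nonneg _) p) haasum
            (by positivity)
        · exact Real.rpow_le_one
            (Finset.sum_nonneg fun j _ => Real.rpow_nonneg (abs_nonneg _) p) hbbsum
            (by positivity)
    _ = 2 := by norm_num

end UpAux

set_option maxHeartbeats 1000000 in
set_option synthInstance.maxHeartbeats 1000000 in
/-- Every `U^p`-atom has `V^p`-norm at most `2`, and consequently every atomic
representation `u = Σ_k λ_k a_k` yields `‖u‖_{V^p} ≤ 2 Σ_k |λ_k|`, i.e. the embedding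
`U^p ↪ V^p` with constant `2`. -/
theorem atoms_have_bounded_variation {H : Type*} [NormedAddCommGroup H]
    [InnerProductSpace ℝ H] (p a b : ℝ) (hp : 1 ≤ p) (hab : a < b) :
    (∀ f : ℝ → H, IsUpAtom p a b f → sSup (variationSums p f a b) ≤ 2) ∧
    (∀ (u : ℝ → H) (lam : ℕ → ℝ) (A : ℕ → ℝ → H),
      (∀ k, IsUpAtom p a b (A k)) →
      Summable (fun k => |lam k|) →
      (∀ s : ℝ, HasSum (fun k => lam k • A k s) (u s)) →
      sSup (variationSums p u a b) ≤ 2 * ∑' k, |lam k|) := by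
  constructor
  · intro f hf
    apply Real.sSup_le _ zero_le_two
    rintro x ⟨K', s, hs, -, -, rfl⟩
    obtain ⟨K, t, φ, ht, -, -, hφ, hfdef⟩ := hf
    exact atom_partition_sum_le hp ht hφ hfdef hs.monotone
  · intro u lam A hA hlam hpt
    apply Real.sSup_le _ (mul_nonneg zero_le_two (tsum_nonneg fun k => abs_nonneg _))
    rintro x ⟨K', s, hs, -, -, rfl⟩
    haveI : Fact (1 ≤ ENNReal.ofReal p) := ⟨ENNReal.one_le_ofReal.2 hp⟩
    set q : ENNReal := ENNReal.ofReal p with hq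
    have hqt : q.toReal = p := ENNReal.toReal_ofReal (by linarith)
    have hqt0 : 0 < q.toReal := by rw [hqt]; linarith
    let G : ℕ → PiLp q (fun _ : Fin K' => H) := fun k =>
      (WithLp.equiv q _).symm fun j : Fin K' => A k (s j.succ) - A k (s j.castSucc)
    let V : PiLp q (fun _ : Fin K' => H) :=
      (WithLp.equiv q _).symm fun j : Fin K' => u (s j.succ) - u (s j.castSucc)
    have hGnorm : ∀ k, ‖G k‖ ≤ 2 := by
      intro k
      obtain ⟨K, t, φ, ht, -, -, hφ, hfdef⟩ := hA k
      rw [PiLp.norm_eq_sum hqt0]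
      simp only [hqt, G, WithLp.equiv_symm_apply, WithLp.ofLp_toLp]
      exact atom_partition_sum_le hp ht hφ hfdef hs.monotone
    have hGsum : HasSum (fun k => lam k • G k) V := by
      let e := PiLp.continuousLinearEquiv q ℝ (fun _ : Fin K' => H)
      have hcomp : HasSum (fun k => e (lam k • G k)) (e V) := by
        apply Pi.hasSum.2
        intro j
        have h := (hpt (s j.succ)).sub (hpt (s j.castSucc))
        simpa [e, G, V, smul_sub] using h
      exact e.hasSum'.1 hcomp
    have hle : ∀ k, ‖lam k • G k‖ ≤ |lam k| * 2 := by
      intro k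
      rw [norm_smul, Real.norm_eq_abs]
      exact mul_le_mul_of_nonneg_left (hGnorm k) (abs_nonneg _)
    have hsumm : Summable fun k => ‖lam k • G k‖ :=
      Summable.of_nonneg_of_le (fun k => norm_nonneg _) hle (hlam.mul_right 2)
    have hVnorm : ‖V‖ ≤ 2 * ∑' k, |lam k| := by
      rw [← hGsum.tsum_eq]
      calc ‖∑' k, lam k • G k‖ ≤ ∑' k, ‖lam k • G k‖ := norm_tsum_le_tsum_norm hsumm
        _ ≤ ∑' k, |lam k| * 2 := hsumm.tsum_le_tsum hle (hlam.mul_right 2)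
        _ = 2 * ∑' k, |lam k| := by rw [tsum_mul_right]; ring
    calc (∑ k : Fin K', ‖u (s k.succ) - u (s k.castSucc)‖ ^ p) ^ (1 / p) = ‖V‖ := by
          rw [PiLp.norm_eq_sum hqt0]
          simp only [hqt, V, WithLp.equiv_symm_apply, WithLp.ofLp_toLp]
      _ ≤ 2 * ∑' k, |lam k| := hVnorm
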